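/- Let Γ ⊂ ℂ be a T_n-regular set, i.e. there exist δ > 0 and N ∈ ℕ such that ‖(T_n − z)φ‖ ≥ δ‖φ‖ for all z ∈ Γ, all φ ∈ L_n and all n ≥ N. Then Γ is contained in the resolvent set ρ(T) of T. -/

import Mathlib

open scoped ComplexInnerProductSpace ComplexConjugate
open Filter

noncomputable section

variable {H : Type*} [NormedAddCommGroup H] [InnerProductSpace ℂ H] [CompleteSpace H]

/-- The resolvent set of a (possibly unbounded) operator given as a `LinearPMap`:
`z` belongs to it iff `T - z` has an everywhere-defined bounded two-sided inverse. -/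
def pmResolventSet (T : H →ₗ.[ℂ] H) : Set ℂ :=
  {z | ∃ R : H →L[ℂ] H, (∀ y : H, ∃ hy : R y ∈ T.domain, T ⟨R y, hy⟩ - z • R y = y) ∧
        ∀ x : T.domain, R (T x - z • (x : H)) = x}

/-- The spectrum of a (possibly unbounded) operator given as a `LinearPMap`. -/
def pmSpectrum (T : H →ₗ.[ℂ] H) : Set ℂ := (pmResolventSet T)ᶜ

set_option maxHeartbeats 2000000

private lemma pm_apply_congr {S T : H →ₗ.[ℂ] H} (h : S = T) {x : S.domain} {y : T.domain}
    (hxy : (x : H) = (y : H)) : S x = T y := by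
  obtain ⟨deq, feq⟩ := LinearPMap.ext_iff.mp h
  obtain ⟨x, hx⟩ := x
  obtain ⟨y, hy⟩ := y
  simp only at hxy
  subst hxy
  exact feq (x := x) (hf := hx) (hg := hy)

private lemma sqrt_trick {a b : ℝ} (h : a ^ 2 = b ^ 2) (ha : 0 ≤ a) (hb : 0 ≤ b) : a = b := by
  rw [← Real.sqrt_sq ha, ← Real.sqrt_sq hb, h]

/-- For a "real" inner product `⟪a, φ⟫`, the norms `‖a - z•φ‖` and `‖a - conj z • φ‖` agree. -/
private lemma norm_sub_conj_smul {E : Type*} [NormedAddCommGroup E] [InnerProductSpace ℂ E]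
    (a φ : E) (z : ℂ) (h : (⟪a, φ⟫ : ℂ) = conj (⟪a, φ⟫ : ℂ)) :
    ‖a - conj z • φ‖ = ‖a - z • φ‖ := by
  have him : (⟪a, φ⟫ : ℂ).im = 0 := by
    have := congrArg Complex.im h
    simp only [Complex.conj_im] at this
    linarith
  have h2 : ∀ w : ℂ, ‖a - w • φ‖ ^ 2 = ‖a‖ ^ 2 - 2 * (w.re * (⟪a, φ⟫ : ℂ).re)
      + ‖w‖ ^ 2 * ‖φ‖ ^ 2 := by
    intro w
    rw [norm_sub_sq (𝕜 := ℂ), inner_smul_right, norm_smul]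
    have hre : RCLike.re (w * (⟪a, φ⟫ : ℂ)) = w.re * (⟪a, φ⟫ : ℂ).re := by
      simp [RCLike.re_to_complex, Complex.mul_re, him]
    rw [hre]; ring
  have h3 : ‖a - conj z • φ‖ ^ 2 = ‖a - z • φ‖ ^ 2 := by
    rw [h2, h2]
    simp [Complex.conj_re]
  exact sqrt_trick h3 (norm_nonneg _) (norm_nonneg _)

/-- **The Galerkin method for a semi-bounded self-adjoint operator: regular sets.**
If `Γ` is a `T_n`-regular set, then `Γ ⊆ ρ(T)`. -/
theorem stmt_0
    -- `T` is a semi-bounded self-adjoint operator with `m = min σ(T)`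
    (T : H →ₗ.[ℂ] H) (hsa : IsSelfAdjoint T)
    (m : ℝ) (hm : IsLeast {x : ℝ | (x : ℂ) ∈ pmSpectrum T} m)
    -- `t` is the closed sesquilinear form associated to `T` (linear in the first,
    -- conjugate-linear in the second argument), defined on `dt = Dom t`
    (dt : Submodule ℂ H) (t : H →ₗ[ℂ] H →ₗ⋆[ℂ] ℂ)
    (hdomt : T.domain ≤ dt)
    (therm : ∀ φ ∈ dt, ∀ ψ ∈ dt, t ψ φ = starRingEnd ℂ (t φ ψ))
    (hcomp : ∀ φ : T.domain, ∀ ψ ∈ dt, t φ ψ = ⟪ψ, T φ⟫)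
    (hlb : ∀ φ ∈ dt, m * ‖φ‖ ^ 2 ≤ (t φ φ).re)
    -- the square of the norm of `H_t`
    (tnormSq : H → ℝ)
    (htn : ∀ φ, tnormSq φ = (t φ φ).re - m * ‖φ‖ ^ 2 + ‖φ‖ ^ 2)
    -- the form `t` is closed, i.e. `H_t` is complete
    (hclosed : ∀ u : ℕ → H, (∀ k, u k ∈ dt) →
      (∀ ε > 0, ∃ N, ∀ j ≥ N, ∀ k ≥ N, tnormSq (u j - u k) < ε) →
      ∃ φ ∈ dt, Tendsto (fun k => tnormSq (u k - φ)) atTop (nhds 0))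
    -- `(L n)` is a sequence of finite-dimensional trial spaces in `Dom t`, dense in `H_t`
    (L : ℕ → Submodule ℂ H) (hL : ∀ n, L n ≤ dt)
    [∀ n, FiniteDimensional ℂ (L n)]
    (hLdense : ∀ φ ∈ dt, ∃ u : ℕ → H, (∀ n, u n ∈ L n) ∧
      Tendsto (fun n => tnormSq (φ - u n)) atTop (nhds 0))
    -- `T_n` is the compression of the form `t` to `L n`
    (Tn : ∀ n, L n →ₗ[ℂ] L n)
    (hTn : ∀ n, ∀ φ ψ : L n, (⟪ψ, Tn n φ⟫ : ℂ) = t (φ : H) (ψ : H))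
    -- `Γ` is a `T_n`-regular set
    (Γ : Set ℂ)
    (hreg : ∃ δ > 0, ∃ N : ℕ, ∀ z ∈ Γ, ∀ n ≥ N, ∀ φ : L n, δ * ‖φ‖ ≤ ‖Tn n φ - z • φ‖) :
    Γ ⊆ pmResolventSet T := by
  intro z hz
  obtain ⟨δ, hδ0, N, hδ⟩ := hreg
  have hd : Dense (T.domain : Set H) := hsa.dense_domain
  have hTT : T.adjoint = T := LinearPMap.isSelfAdjoint_def.mp hsa
  have hdomeq : T.adjoint.domain = T.domain := congrArg LinearPMap.domain hTT
  -- the graph of `T` is characterized by the adjoint identity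
  have hgraph : ∀ w v : H, (∀ u : T.domain, (⟪v, (u : H)⟫ : ℂ) = ⟪w, T u⟫) →
      ∃ hw : w ∈ T.domain, T ⟨w, hw⟩ = v := by
    intro w v hwv
    have hw' : w ∈ T.adjoint.domain := LinearPMap.mem_adjoint_domain_of_exists w ⟨v, hwv⟩
    have happ : T.adjoint ⟨w, hw'⟩ = v := LinearPMap.adjoint_apply_eq hd _ hwv
    have hw : w ∈ T.domain := hdomeq ▸ hw'
    refine ⟨hw, ?_⟩
    rw [← happ]
    exact (pm_apply_congr hTT (x := ⟨w, hw'⟩) (y := ⟨w, hw⟩) rfl).symm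
  -- symmetry of T
  have hsym : ∀ u v : T.domain, (⟪T u, (v : H)⟫ : ℂ) = ⟪(u : H), T v⟫ := by
    intro u v
    have hu' : (u : H) ∈ T.adjoint.domain := hdomeq.symm ▸ u.2
    have h2 := LinearPMap.adjoint_isFormalAdjoint hd (⟨(u : H), hu'⟩ : T.adjoint.domain) v
    rwa [pm_apply_congr hTT (x := ⟨(u : H), hu'⟩) (y := u) rfl] at h2
  -- the shifted form q
  set lam : ℂ := ((m - 1 : ℝ) : ℂ) with hlamdef
  set q : H → H → ℂ := fun a b => t a b - lam * ⟪b, a⟫ with hqdef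
  have hconjlam : conj lam = lam := Complex.conj_ofReal _
  have htnn : ∀ φ ∈ dt, ‖φ‖ ^ 2 ≤ tnormSq φ := by
    intro φ hφ; rw [htn]; linarith [hlb φ hφ]
  have hq_tn : ∀ φ : H, (q φ φ).re = tnormSq φ := by
    intro φ
    have h1 : (⟪φ, φ⟫ : ℂ).re = ‖φ‖ ^ 2 := by
      rw [inner_self_eq_norm_sq_to_K]; simp [← Complex.ofReal_pow]
    have : (q φ φ).re = (t φ φ).re - (m - 1) * ‖φ‖ ^ 2 := by
      simp only [hqdef, hlamdef, Complex.sub_re, Complex.re_ofReal_mul, h1]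
    rw [this, htn]; ring
  have hq_symm_re : ∀ φ ∈ dt, ∀ ψ ∈ dt, (q ψ φ).re = (q φ ψ).re := by
    intro φ hφ ψ hψ
    have : q ψ φ = conj (q φ ψ) := by
      simp only [hqdef, map_sub, map_mul, hconjlam, inner_conj_symm, therm φ hφ ψ hψ]
    rw [this, Complex.conj_re]
  have hq_sub_left : ∀ a b c : H, q (a - b) c = q a c - q b c := by
    intro a b c
    simp only [hqdef, map_sub, LinearMap.sub_apply, inner_sub_right]
    ring
  have hq_add_left : ∀ a b c : H, q (a + b) c = q a c + q b c := by
    intro a b c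
    simp only [hqdef, map_add, LinearMap.add_apply, inner_add_right]
    ring
  have hq_sub_right : ∀ a b c : H, q a (b - c) = q a b - q a c := by
    intro a b c
    simp only [hqdef, map_sub, inner_sub_left]
    ring
  have hq_ineq : ∀ u ∈ dt, ∀ e ∈ dt, 2 * (q u e).re ≤ tnormSq u + tnormSq e := by
    intro u hu e he
    have h0 : 0 ≤ (q (u - e) (u - e)).re := by
      rw [hq_tn]
      exact le_trans (sq_nonneg _) (htnn _ (Submodule.sub_mem dt hu he))
    have hexp : q (u - e) (u - e) = q u u - q u e - q e u + q e e := by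
      rw [hq_sub_left, hq_sub_right, hq_sub_right]; ring
    have hre := congrArg Complex.re hexp
    simp only [Complex.add_re, Complex.sub_re] at hre
    have hs := hq_symm_re u hu e he
    rw [hre] at h0
    rw [← hq_tn u, ← hq_tn e]
    linarith
  -- the Galerkin approximation machine
  have key : ∀ x : T.domain, ∃ ξ : (n : ℕ) → L n,
      Tendsto (fun n => ((ξ n : H))) atTop (nhds (x : H)) ∧
      Tendsto (fun n => ((Tn n (ξ n) : H) - lam • ((ξ n : H)))) atTop
        (nhds (T x - lam • (x : H))) := by
    intro x
    have hxdt : (x : H) ∈ dt := hdomt x.2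
    set w : H := T x - lam • (x : H) with hwdef
    have hAn : ∀ n (φ : L n), ‖φ‖ ≤ ‖Tn n φ - lam • φ‖ := by
      intro n φ
      have hφdt : (φ : H) ∈ dt := hL n φ.2
      have e1 : (⟪φ, Tn n φ - lam • φ⟫ : ℂ) = q (φ : H) (φ : H) := by
        rw [inner_sub_right, inner_smul_right, hTn n φ φ, Submodule.coe_inner]
      have h2 : ‖(φ : H)‖ ^ 2 ≤ (⟪φ, Tn n φ - lam • φ⟫ : ℂ).re := by
        rw [e1, hq_tn]; exact htnn _ hφdt
      have h3 : (⟪φ, Tn n φ - lam • φ⟫ : ℂ).re ≤ ‖φ‖ * ‖Tn n φ - lam • φ‖ := by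
        exact re_inner_le_norm (𝕜 := ℂ) φ (Tn n φ - lam • φ)
      have hnc : ‖(φ : H)‖ = ‖φ‖ := rfl
      rw [hnc] at h2
      rcases eq_or_lt_of_le (norm_nonneg φ) with h4 | h4
      · rw [← h4]; exact norm_nonneg _
      · nlinarith
    have hsurjn : ∀ n (y : L n), ∃ φ : L n, Tn n φ - lam • φ = y := by
      intro n
      set A : L n →ₗ[ℂ] L n := Tn n - lam • (LinearMap.id : L n →ₗ[ℂ] L n) with hA
      have hAapp : ∀ φ : L n, A φ = Tn n φ - lam • φ := by
        intro φ; simp [hA]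
      have hinj : Function.Injective ⇑A := by
        intro a b hab
        rw [hAapp, hAapp] at hab
        have h6 : Tn n (a - b) - lam • (a - b) = (Tn n a - lam • a) - (Tn n b - lam • b) := by
          rw [map_sub, smul_sub]; abel
        rw [hab, sub_self] at h6
        have h7 := hAn n (a - b)
        rw [h6, norm_zero] at h7
        have : ‖a - b‖ = 0 := le_antisymm h7 (norm_nonneg _)
        rw [norm_eq_zero, sub_eq_zero] at this
        exact this
      have hsurj := LinearMap.injective_iff_surjective.mp hinj
      intro y
      obtain ⟨φ, hφ⟩ := hsurj y
      exact ⟨φ, by rw [← hAapp, hφ]⟩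
    choose ξ hξ using fun n => hsurjn n (((L n).orthogonalProjectionOnto) w)
    obtain ⟨p, hp, hpt⟩ := hLdense (x : H) hxdt
    have hcoe : ∀ n, (Tn n (ξ n) : H) - lam • ((ξ n : H))
        = ((((L n).orthogonalProjectionOnto) w : L n) : H) := by
      intro n
      rw [← hξ n]
      simp
    have hmain : ∀ n, tnormSq ((ξ n : H) - p n) ≤ tnormSq ((x : H) - p n) := by
      intro n
      set eH : H := (ξ n : H) - p n with hedef
      have hem : eH ∈ L n := Submodule.sub_mem _ (ξ n).2 (hp n)
      have hedt : eH ∈ dt := hL n hem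
      have hpdt : p n ∈ dt := hL n (hp n)
      have hudt : (x : H) - p n ∈ dt := Submodule.sub_mem _ hxdt hpdt
      have hQ : (⟪eH, w - ((Tn n (ξ n) : H) - lam • ((ξ n : H)))⟫ : ℂ) = 0 := by
        rw [hcoe n]
        have h0 : (⟪w - (((L n).orthogonalProjectionOnto w : L n) : H), eH⟫ : ℂ) = 0 :=
          Submodule.starProjection_inner_eq_zero w eH hem
        rw [← inner_conj_symm, h0, map_zero]
      have hq1 : q (x : H) eH = q ((ξ n : H)) eH := by
        have e2 : q (x : H) eH = ⟪eH, w⟫ := by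
          simp only [hqdef]
          rw [hcomp x eH hedt, hwdef, inner_sub_right, inner_smul_right]
        have e3 : q ((ξ n : H)) eH = ⟪eH, (Tn n (ξ n) : H) - lam • ((ξ n : H))⟫ := by
          simp only [hqdef]
          have h1 := hTn n (ξ n) ⟨eH, hem⟩
          rw [Submodule.coe_inner] at h1
          rw [inner_sub_right, inner_smul_right, ← h1]
        rw [inner_sub_right, sub_eq_zero] at hQ
        rw [e2, e3, hQ]
      have hq2 : (q ((x : H) - p n) eH) = q eH eH := by
        have hsplit : (x : H) - p n = ((x : H) - (ξ n : H)) + eH := by rw [hedef]; abel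
        rw [hsplit, hq_add_left, hq_sub_left, hq1, sub_self, zero_add]
      have h7 := hq_ineq ((x : H) - p n) hudt eH hedt
      have h8 : (q ((x : H) - p n) eH).re = tnormSq eH := by rw [hq2, hq_tn]
      rw [h8] at h7
      linarith
    have hpt' : Tendsto (fun n => Real.sqrt (tnormSq ((x : H) - p n))) atTop (nhds 0) := by
      have := (Real.continuous_sqrt.tendsto 0).comp hpt
      rw [Real.sqrt_zero] at this; exact this
    have hxiconv : Tendsto (fun n => ((ξ n : H))) atTop (nhds (x : H)) := by
      rw [tendsto_iff_norm_sub_tendsto_zero]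
      refine squeeze_zero (fun n => norm_nonneg _)
        (g := fun n => 2 * Real.sqrt (tnormSq ((x : H) - p n))) ?_ ?_
      · intro n
        have hudt : (x : H) - p n ∈ dt := Submodule.sub_mem _ hxdt (hL n (hp n))
        have hedt' : (ξ n : H) - p n ∈ dt := hL n (Submodule.sub_mem _ (ξ n).2 (hp n))
        have h1 : ‖(x : H) - p n‖ ≤ Real.sqrt (tnormSq ((x : H) - p n)) := by
          rw [← Real.sqrt_sq (norm_nonneg _)]
          exact Real.sqrt_le_sqrt (htnn _ hudt)
        have h2 : ‖(ξ n : H) - p n‖ ≤ Real.sqrt (tnormSq ((x : H) - p n)) := by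
          rw [← Real.sqrt_sq (norm_nonneg _)]
          exact Real.sqrt_le_sqrt (le_trans (htnn _ hedt') (hmain n))
        have h3 : ‖(ξ n : H) - (x : H)‖ ≤ ‖(ξ n : H) - p n‖ + ‖p n - (x : H)‖ :=
          norm_sub_le_norm_sub_add_norm_sub _ _ _
        rw [norm_sub_rev (p n)] at h3
        show ‖(ξ n : H) - (x : H)‖ ≤ 2 * Real.sqrt (tnormSq ((x : H) - p n))
        linarith
      · simpa using hpt'.const_mul 2
    have hQw : Tendsto (fun n => ((((L n).orthogonalProjectionOnto) w : L n) : H)) atTop (nhds w) := by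
      rw [tendsto_iff_norm_sub_tendsto_zero]
      rw [Metric.tendsto_atTop]
      intro ε hε
      obtain ⟨d, hdmem, hdist⟩ := hd.exists_dist_lt w (by positivity : (0 : ℝ) < ε / 2)
      have hddt : d ∈ dt := hdomt hdmem
      obtain ⟨c, hc, hct⟩ := hLdense d hddt
      have hev : ∀ᶠ n in atTop, tnormSq (d - c n) < (ε / 2) ^ 2 :=
        hct.eventually (gt_mem_nhds (by positivity))
      obtain ⟨N₁, hN₁⟩ := eventually_atTop.mp hev
      refine ⟨N₁, fun n hn => ?_⟩
      have hmin : ‖w - ((((L n).orthogonalProjectionOnto) w : L n) : H)‖ ≤ ‖w - c n‖ := by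
        rw [← Submodule.starProjection_apply, Submodule.starProjection_minimal]
        exact ciInf_le ⟨0, by rintro r ⟨y, rfl⟩; positivity⟩ (⟨c n, hc n⟩ : L n)
      have hdw : ‖w - d‖ < ε / 2 := by rwa [← dist_eq_norm]
      have hdc : ‖d - c n‖ < ε / 2 := by
        have hddt2 : d - c n ∈ dt := Submodule.sub_mem _ hddt (hL n (hc n))
        have h1 : ‖d - c n‖ ^ 2 < (ε / 2) ^ 2 := lt_of_le_of_lt (htnn _ hddt2) (hN₁ n hn)
        exact lt_of_pow_lt_pow_left₀ 2 (by positivity) h1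
      have htr : ‖w - c n‖ ≤ ‖w - d‖ + ‖d - c n‖ := norm_sub_le_norm_sub_add_norm_sub _ _ _
      rw [Real.dist_eq, sub_zero, abs_of_nonneg (norm_nonneg _), norm_sub_rev]
      calc ‖w - ((((L n).orthogonalProjectionOnto) w : L n) : H)‖ ≤ ‖w - c n‖ := hmin
        _ ≤ ‖w - d‖ + ‖d - c n‖ := htr
        _ < ε / 2 + ε / 2 := by linarith
        _ = ε := by ring
    exact ⟨ξ, hxiconv, hQw.congr (fun n => (hcoe n).symm)⟩
  -- limit of the finite-dimensional lower bounds
  have lemA : ∀ ζ : ℂ, (∀ n, N ≤ n → ∀ φ : L n, δ * ‖φ‖ ≤ ‖Tn n φ - ζ • φ‖) →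
      ∀ x : T.domain, δ * ‖(x : H)‖ ≤ ‖T x - ζ • (x : H)‖ := by
    intro ζ hb x
    obtain ⟨ξ, h1, h2⟩ := key x
    have h3 : Tendsto (fun n => ((Tn n (ξ n) : H) - ζ • ((ξ n : H)))) atTop
        (nhds (T x - ζ • (x : H))) := by
      have h4 : ∀ n, (Tn n (ξ n) : H) - ζ • ((ξ n : H)) =
          ((Tn n (ξ n) : H) - lam • ((ξ n : H))) + (lam - ζ) • ((ξ n : H)) := by
        intro n; rw [sub_smul]; abel
      have h5 : T x - ζ • (x : H) = (T x - lam • (x : H)) + (lam - ζ) • (x : H) := by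
        rw [sub_smul]; abel
      rw [h5]
      exact Tendsto.congr (fun n => (h4 n).symm) (h2.add (h1.const_smul (lam - ζ)))
    refine le_of_tendsto_of_tendsto ((h1.norm).const_mul δ) h3.norm ?_
    filter_upwards [eventually_ge_atTop N] with n hn
    have hco : ((Tn n (ξ n) - ζ • ξ n : L n) : H) = (Tn n (ξ n) : H) - ζ • ((ξ n : H)) := by
      simp
    calc δ * ‖(ξ n : H)‖ = δ * ‖ξ n‖ := rfl
      _ ≤ ‖Tn n (ξ n) - ζ • ξ n‖ := hb n hn (ξ n)
      _ = ‖((Tn n (ξ n) - ζ • ξ n : L n) : H)‖ := rfl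
      _ = ‖(Tn n (ξ n) : H) - ζ • ((ξ n : H))‖ := by rw [hco]
  have hz1 : ∀ x : T.domain, δ * ‖(x : H)‖ ≤ ‖T x - z • (x : H)‖ :=
    lemA z fun n hn φ => hδ z hz n hn φ
  have hz2 : ∀ x : T.domain, δ * ‖(x : H)‖ ≤ ‖T x - conj z • (x : H)‖ := by
    refine lemA (conj z) fun n hn φ => ?_
    have hφdt : (φ : H) ∈ dt := hL n φ.2
    have hreal : (⟪Tn n φ, φ⟫ : ℂ) = conj (⟪Tn n φ, φ⟫ : ℂ) := by
      have h1 : (⟪φ, Tn n φ⟫ : ℂ) = t (φ : H) (φ : H) := hTn n φ φ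
      have h2 := therm _ hφdt _ hφdt
      have h3 : (⟪Tn n φ, φ⟫ : ℂ) = conj (t (φ : H) (φ : H)) := by
        rw [← inner_conj_symm (Tn n φ) φ, h1]
      rw [h3, Complex.conj_conj]
      exact h2.symm
    rw [norm_sub_conj_smul (Tn n φ) φ z hreal]
    exact hδ z hz n hn φ
  -- the operator T - z as a linear map on its domain
  set Lz : T.domain →ₗ[ℂ] H := T.toFun - z • T.domain.subtype with hLzdef
  have hLz : ∀ x : T.domain, Lz x = T x - z • (x : H) := fun x => rfl
  have hinj : Function.Injective Lz := by
    intro a b hab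
    have h0 : Lz (a - b) = 0 := by rw [map_sub, hab, sub_self]
    have h1 := hz1 (a - b)
    rw [← hLz, h0, norm_zero] at h1
    have h2 : ‖((a - b : T.domain) : H)‖ = 0 := by nlinarith [norm_nonneg ((a - b : T.domain) : H)]
    rw [norm_eq_zero, ZeroMemClass.coe_eq_zero, sub_eq_zero] at h2
    exact h2
  have hdr : Dense ((LinearMap.range Lz : Submodule ℂ H) : Set H) := by
    rw [Submodule.dense_iff_topologicalClosure_eq_top, Submodule.topologicalClosure_eq_top_iff,
      Submodule.eq_bot_iff]
    intro v hv
    rw [Submodule.mem_orthogonal] at hv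
    have hv' : ∀ u : T.domain, (⟪conj z • v, (u : H)⟫ : ℂ) = ⟪v, T u⟫ := by
      intro u
      have h3 := hv (Lz u) (LinearMap.mem_range_self _ u)
      have h4 : (⟪v, Lz u⟫ : ℂ) = 0 := by rw [← inner_conj_symm, h3, map_zero]
      rw [hLz, inner_sub_right, inner_smul_right, sub_eq_zero] at h4
      rw [inner_smul_left, Complex.conj_conj, h4]
    obtain ⟨hvm, hva⟩ := hgraph v (conj z • v) hv'
    have h5 := hz2 ⟨v, hvm⟩
    have h6 : T ⟨v, hvm⟩ - conj z • v = 0 := by rw [hva, sub_self]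
    rw [h6, norm_zero] at h5
    have : ‖v‖ = 0 := by nlinarith [norm_nonneg v]
    rwa [norm_eq_zero] at this
  have hsurjL : Function.Surjective Lz := by
    intro y
    have hy : y ∈ closure ((LinearMap.range Lz : Submodule ℂ H) : Set H) := hdr y
    obtain ⟨ys, hys, hysl⟩ := mem_closure_iff_seq_limit.mp hy
    choose u hu using fun n => hys n
    have hcauchy : CauchySeq (fun k => ((u k : H))) := by
      rw [Metric.cauchySeq_iff]
      intro ε hε
      obtain ⟨N₁, hN₁⟩ := Metric.cauchySeq_iff.mp hysl.cauchySeq (δ * ε) (by positivity)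
      refine ⟨N₁, fun a ha b hb => ?_⟩
      have h7 := hz1 (u a - u b)
      rw [← hLz, map_sub, hu, hu] at h7
      have h8 := hN₁ a ha b hb
      rw [dist_eq_norm] at h8 ⊢
      have hco : ((u a - u b : T.domain) : H) = (u a : H) - (u b : H) := rfl
      rw [hco] at h7
      nlinarith
    obtain ⟨x₀, hx₀⟩ := cauchySeq_tendsto_of_complete hcauchy
    have hTu : Tendsto (fun k => T (u k)) atTop (nhds (y + z • x₀)) := by
      have heq : ∀ k, T (u k) = ys k + z • ((u k : H)) := by
        intro k
        have := hu k
        rw [hLz] at this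
        rw [← this]; abel
      exact Tendsto.congr (fun k => (heq k).symm) (hysl.add (hx₀.const_smul z))
    have hgr := hgraph x₀ (y + z • x₀) ?_
    · obtain ⟨hxm, hxa⟩ := hgr
      refine ⟨⟨x₀, hxm⟩, ?_⟩
      rw [hLz, hxa]
      abel
    · intro v
      have l1 : Tendsto (fun k => (⟪(u k : H), T v⟫ : ℂ)) atTop (nhds ⟪x₀, T v⟫) :=
        hx₀.inner tendsto_const_nhds
      have l2 : Tendsto (fun k => (⟪(u k : H), T v⟫ : ℂ)) atTop
          (nhds ⟪y + z • x₀, (v : H)⟫) := by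
        have heq : ∀ k, (⟪T (u k), (v : H)⟫ : ℂ) = ⟪(u k : H), T v⟫ := fun k => hsym (u k) v
        exact Tendsto.congr (fun k => heq k) (hTu.inner tendsto_const_nhds)
      exact tendsto_nhds_unique l2 l1
  set eqv := LinearEquiv.ofBijective Lz ⟨hinj, hsurjL⟩ with heqvdef
  have heqv : ∀ x : T.domain, eqv x = Lz x := fun x => LinearEquiv.ofBijective_apply _ x
  have hLzsymm : ∀ y : H, Lz (eqv.symm y) = y := by
    intro y
    have := eqv.apply_symm_apply y
    rwa [heqv] at this
  set R₀ : H →ₗ[ℂ] H := (T.domain.subtype).comp (eqv.symm : H →ₗ[ℂ] T.domain) with hR₀def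
  have hR₀ : ∀ y : H, R₀ y = ((eqv.symm y : T.domain) : H) := fun y => rfl
  have hRb : ∀ y : H, ‖R₀ y‖ ≤ δ⁻¹ * ‖y‖ := by
    intro y
    have h9 := hz1 (eqv.symm y)
    rw [← hLz, hLzsymm] at h9
    rw [hR₀]
    calc ‖((eqv.symm y : T.domain) : H)‖ = δ⁻¹ * (δ * ‖((eqv.symm y : T.domain) : H)‖) := by
          field_simp
      _ ≤ δ⁻¹ * ‖y‖ := by
          apply mul_le_mul_of_nonneg_left h9 (by positivity)
  set R : H →L[ℂ] H := LinearMap.mkContinuous R₀ δ⁻¹ hRb with hRdef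
  have hRapp : ∀ y : H, R y = ((eqv.symm y : T.domain) : H) := fun y =>
    (LinearMap.mkContinuous_apply R₀ δ⁻¹ hRb y).trans (hR₀ y)
  refine ⟨R, ?_, ?_⟩
  · intro y
    have hy : R y ∈ T.domain := by rw [hRapp]; exact (eqv.symm y).2
    refine ⟨hy, ?_⟩
    have h12 : (⟨R y, hy⟩ : T.domain) = eqv.symm y := Subtype.ext (hRapp y)
    rw [h12, hRapp]
    have h13 := hLzsymm y
    rw [hLz] at h13
    exact h13
  · intro x
    have h14 : T x - z • (x : H) = eqv x := (hLz x).symm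
    rw [h14]
    have : R (eqv x) = ((eqv.symm (eqv x) : T.domain) : H) := hRapp _
    rw [this, eqv.symm_apply_apply]
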